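/- If X is a well-ordering, then ω^X (finite non-increasing sequences from X with the lexicographic order) is also a well-ordering. -/

import Mathlib

section OmegaPowAux

variable {X : Type*} [LinearOrder X]

private def Rlex (σ τ : {l : List X // l.Chain' (· ≥ ·)}) : Prop :=
  List.Lex (· < ·) σ.1 τ.1

private lemma bound_of_chain' {a : X} {l : List X} (h : (a :: l).Chain' (· ≥ ·)) :
    ∀ b ∈ l, b ≤ a := by
  induction l generalizing a with
  | nil => simp
  | cons c l ih =>
    intro b hb
    rcases List.isChain_cons_cons.1 h with ⟨hac, hcl⟩
    rcases List.mem_cons.1 hb with rfl | hb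
    · exact hac
    · exact le_trans (ih hcl b hb) hac

private lemma acc_nil (hc : ([] : List X).Chain' (· ≥ ·)) :
    Acc (Rlex (X := X)) ⟨[], hc⟩ := by
  constructor
  rintro ⟨m, hm⟩ hlt
  cases hlt

private lemma acc_cons (x : X)
    (hx : ∀ y, y < x → ∀ σ : {l : List X // l.Chain' (· ≥ ·)},
      (∀ b ∈ σ.1, b ≤ y) → Acc Rlex σ)
    (σ : {l : List X // l.Chain' (· ≥ ·)}) (hσ : Acc Rlex σ) :
    ∀ (hc : (x :: σ.1).Chain' (· ≥ ·)), Acc (Rlex (X := X)) ⟨x :: σ.1, hc⟩ := by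
  induction hσ with
  | intro σ hacc ih =>
    intro hc
    constructor
    rintro ⟨m, hm⟩ hlt
    cases hlt with
    | nil => exact acc_nil hm
    | @rel b m' _ _ h =>
      refine hx b h ⟨b :: m', hm⟩ ?_
      intro c hcmem
      rcases List.mem_cons.1 hcmem with rfl | hcmem
      · exact le_refl c
      · exact bound_of_chain' hm c hcmem
    | @cons _ m' _ h =>
      have hm' : m'.Chain' (· ≥ ·) := hm.tail
      have hcm : (x :: m').Chain' (· ≥ ·) := hm
      exact ih ⟨m', hm'⟩ h hcm

private lemma acc_all (hX : WellFounded ((· < ·) : X → X → Prop)) :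
    ∀ x : X, ∀ l : List X, ∀ hc : l.Chain' (· ≥ ·),
      (∀ b ∈ l, b ≤ x) → Acc (Rlex (X := X)) ⟨l, hc⟩ := by
  intro x
  induction x using hX.induction with
  | _ x ihx =>
    intro l
    induction l with
    | nil => intro hc _; exact acc_nil hc
    | cons a l ihl =>
      intro hc hb
      have ha : a ≤ x := hb a List.mem_cons_self
      rcases eq_or_lt_of_le ha with rfl | hlt
      · have htail : l.Chain' (· ≥ ·) := hc.tail
        have hbt : ∀ b ∈ l, b ≤ a := bound_of_chain' hc
        have hacc : Acc (Rlex (X := X)) ⟨l, htail⟩ := ihl htail hbt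
        exact acc_cons a (fun y hy σ hbσ => ihx y hy σ.1 σ.2 hbσ) ⟨l, htail⟩ hacc hc
      · refine ihx a hlt (a :: l) hc ?_
        intro b hbm
        rcases List.mem_cons.1 hbm with rfl | hbm
        · exact le_refl b
        · exact bound_of_chain' hc b hbm

end OmegaPowAux

/-- If `X` is a well-ordering, then `ω^X` (finite non-increasing
sequences from `X` with the lexicographic order) is also a well-ordering, i.e.
its strict order is well-founded. -/
theorem omega_pow_wellFounded {X : Type*} [LinearOrder X]
    (hX : WellFounded ((· < ·) : X → X → Prop)) :
    WellFounded
      (fun σ τ : {l : List X // l.Chain' (· ≥ ·)} => List.Lex (· < ·) σ.1 τ.1) := by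
  constructor
  rintro ⟨l, hc⟩
  cases l with
  | nil => exact acc_nil hc
  | cons a l =>
    refine acc_all hX a (a :: l) hc ?_
    intro b hb
    rcases List.mem_cons.1 hb with rfl | hb
    · exact le_refl b
    · exact bound_of_chain' hc b hb
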